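/- For p > 1/2, the equation x = 2 ln(1 + px) has exactly two nonnegative real solutions: x = 0 and x = x(p) := −2 W_{−1}(−e^{−1/(2p)}/(2p)) − 1/p > 0. For p ≤ 1/2, x = 0 is the only nonnegative solution. -/

import Mathlib

open Real

/-- A strictly concave equation `x = 2 log(1+px)` cannot have three roots `a < b < c ≥ 0`. -/
lemma three_roots_false {p a b c : ℝ} (hp : 0 < p) (ha : 0 ≤ a)
    (hab : a < b) (hbc : b < c)
    (hA : a = 2 * Real.log (1 + p * a))
    (hB : b = 2 * Real.log (1 + p * b))
    (hC : c = 2 * Real.log (1 + p * c)) : False := by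
  have hpa : (0:ℝ) < 1 + p * a := by nlinarith
  have hpc : (0:ℝ) < 1 + p * c := by nlinarith
  have hca : 0 < c - a := by linarith
  set l := (c - b) / (c - a) with hl
  set m := (b - a) / (c - a) with hm
  have hl0 : 0 < l := div_pos (by linarith) hca
  have hm0 : 0 < m := div_pos (by linarith) hca
  have hlm : l + m = 1 := by
    rw [hl, hm, ← add_div, div_eq_one_iff_eq (ne_of_gt hca)]; ring
  have hmid : l * (1 + p * a) + m * (1 + p * c) = 1 + p * b := by
    rw [hl, hm]; field_simp; ring
  have hne : (1 + p * a) ≠ (1 + p * c) := ne_of_lt (by nlinarith)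
  have hkey := strictConcaveOn_log_Ioi.2 (Set.mem_Ioi.2 hpa) (Set.mem_Ioi.2 hpc)
    hne hl0 hm0 hlm
  rw [smul_eq_mul, smul_eq_mul, smul_eq_mul, smul_eq_mul, hmid] at hkey
  have h1 : Real.log (1 + p * a) = a / 2 := by linarith
  have h2 : Real.log (1 + p * c) = c / 2 := by linarith
  have h3 : Real.log (1 + p * b) = b / 2 := by linarith
  rw [h1, h2, h3] at hkey
  have hcomb : l * (a/2) + m * (c/2) = b / 2 := by
    rw [hl, hm]; field_simp; ring
  linarith

/-- `x₀ = -2w - 1/p` is a root of `x = 2 log(1+px)` when `w` is the Lambert-W value. -/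
lemma root_x0 {p w : ℝ} (hp : 1/2 < p) (hw : w ≤ -1)
    (hwe : w * Real.exp w = -(Real.exp (-(1 / (2 * p))) / (2 * p))) :
    -2 * w - 1 / p = 2 * Real.log (1 + p * (-2 * w - 1 / p)) := by
  have hp0 : 0 < p := by linarith
  have h1 : 1 + p * (-2 * w - 1 / p) = -2 * p * w := by field_simp; ring
  rw [h1]
  have h3 : 2 * p * (w * Real.exp w) = -Real.exp (-(1/(2*p))) := by
    rw [hwe]; field_simp
  have h2 : -2 * p * w = Real.exp (-(1/(2*p)) - w) := by
    rw [Real.exp_sub, eq_div_iff (Real.exp_ne_zero w)]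
    linear_combination -h3
  rw [h2, Real.log_exp]
  field_simp; ring

/-- For `p > 1/2` the equation `x = 2 ln(1+px)` has exactly two nonnegative solutions,
`0` and `x(p) = −2W₋₁(−e^{−1/(2p)}/(2p)) − 1/p > 0` (with `W₋₁` characterized by
`w ≤ −1`, `w e^w = −e^{−1/(2p)}/(2p)`); for `0 < p ≤ 1/2`, `0` is the only one. -/
theorem martingale_root_equation :
    (∀ p : ℝ, 1/2 < p → ∀ w : ℝ, w ≤ -1 →
        w * Real.exp w = -(Real.exp (-(1 / (2 * p))) / (2 * p)) →
        0 < -2 * w - 1 / p ∧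
        {x : ℝ | 0 ≤ x ∧ x = 2 * Real.log (1 + p * x)} = {0, -2 * w - 1 / p}) ∧
    (∀ p : ℝ, 0 < p → p ≤ 1/2 →
        {x : ℝ | 0 ≤ x ∧ x = 2 * Real.log (1 + p * x)} = {0}) := by
  constructor
  · intro p hp w hw hwe
    have hp0 : 0 < p := by linarith
    have hroot := root_x0 hp hw hwe
    have hx0pos : 0 < -2 * w - 1 / p := by
      have : 1 / p < 2 := by rw [div_lt_iff₀ hp0]; linarith
      linarith
    refine ⟨hx0pos, ?_⟩
    ext x
    simp only [Set.mem_setOf_eq, Set.mem_insert_iff, Set.mem_singleton_iff]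
    constructor
    · rintro ⟨hx0, hx⟩
      by_contra h
      push_neg at h
      obtain ⟨hne0, hnex⟩ := h
      have hxpos : 0 < x := lt_of_le_of_ne hx0 (Ne.symm hne0)
      have h0eq : (0:ℝ) = 2 * Real.log (1 + p * 0) := by simp
      rcases lt_or_gt_of_ne hnex with hlt | hgt
      · exact three_roots_false hp0 le_rfl hxpos hlt h0eq hx hroot
      · exact three_roots_false hp0 le_rfl hx0pos hgt h0eq hroot hx
    · rintro (rfl | rfl)
      · exact ⟨le_rfl, by simp⟩
      · exact ⟨le_of_lt hx0pos, hroot⟩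
  · intro p hp0 hp
    ext x
    simp only [Set.mem_setOf_eq, Set.mem_singleton_iff]
    constructor
    · rintro ⟨hx0, hx⟩
      by_contra h
      have hxpos : 0 < x := lt_of_le_of_ne hx0 (Ne.symm h)
      have hlog : Real.log (1 + p * x) < (1 + p * x) - 1 :=
        Real.log_lt_sub_one_of_pos (by nlinarith) (ne_of_gt (by nlinarith))
      nlinarith
    · rintro rfl; exact ⟨le_rfl, by simp⟩
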